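/- Let d, r, N be positive integers, let y_1,…,y_N be points of the unit sphere S^{d−1} ⊂ ℝ^d, let w_1,…,w_N > 0, and let c_{d,r} = ∫_{S^{d−1}} ω_1^{2r} dσ(ω), where σ is the uniform (rotation-invariant) probability measure on S^{d−1}. Then the following are equivalent: (i) ∫_{S^{d−1}} f dσ = ∑_{i=1}^N w_i f(y_i) for every homogeneous real polynomial f of degree 2r in d variables; (ii) c_{d,r} (X_1² + ⋯ + X_d²)^r = ∑_{i=1}^N w_i (y_{i1} X_1 + ⋯ + y_{id} X_d)^{2r} for all (X_1,…,X_d) ∈ ℝ^d; (iii) the map ι : ℝ^d → ℝ^N given by ι(ω)_i = (w_i/c_{d,r})^{1/(2r)} ⟨ω, y_i⟩ satisfies (∑_{i=1}^N |ι(ω)_i|^{2r})^{1/(2r)} = (∑_{j=1}^d ω_j²)^{1/2} for all ω ∈ ℝ^d, i.e., ι is an isometric embedding of ℓ_2^d into ℓ_{2r}^N. -/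

import Mathlib

open MeasureTheory Finset MvPolynomial


lemma aux_prod_X_pow (d : ℕ) (k : Fin d → ℕ) :
    (∏ j, (MvPolynomial.X j : MvPolynomial (Fin d) ℝ) ^ k j)
      = MvPolynomial.monomial (Finsupp.equivFunOnFinite.symm k) 1 := by
  rw [← MvPolynomial.prod_X_pow_eq_monomial]
  apply (Finset.prod_subset (Finset.subset_univ _) ?_).symm
  intro x _ hx
  have h0 : k x = 0 := by simpa using (Finsupp.notMem_support_iff.mp hx)
  rw [h0, pow_zero]

lemma aux_expand (d n : ℕ) (X : Fin d → ℝ) :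
    (∑ j, (MvPolynomial.C (X j) * MvPolynomial.X j : MvPolynomial (Fin d) ℝ)) ^ n
      = ∑ k ∈ Finset.piAntidiag (Finset.univ : Finset (Fin d)) n,
          MvPolynomial.monomial (Finsupp.equivFunOnFinite.symm k)
            ((Nat.multinomial Finset.univ k : ℝ) * ∏ j, X j ^ k j) := by
  rw [Finset.sum_pow_eq_sum_piAntidiag]
  refine Finset.sum_congr rfl fun k _ => ?_
  have h2 : (∏ j, (MvPolynomial.C (X j) : MvPolynomial (Fin d) ℝ) ^ k j)
      = MvPolynomial.C (∏ j, X j ^ k j) := by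
    rw [map_prod]
    exact Finset.prod_congr rfl fun j _ => (map_pow _ _ _).symm
  have h1 : (∏ j, (MvPolynomial.C (X j) * MvPolynomial.X j : MvPolynomial (Fin d) ℝ) ^ k j)
      = MvPolynomial.C (∏ j, X j ^ k j) * MvPolynomial.monomial (Finsupp.equivFunOnFinite.symm k) 1 := by
    simp_rw [mul_pow]
    rw [Finset.prod_mul_distrib, aux_prod_X_pow, h2]
  rw [h1, ← MvPolynomial.C_eq_coe_nat, ← mul_assoc, ← MvPolynomial.C_mul,
    MvPolynomial.C_mul_monomial, mul_one]

lemma key_agree {d n : ℕ} (L M : MvPolynomial (Fin d) ℝ →ₗ[ℝ] ℝ)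
    (h : ∀ X : Fin d → ℝ,
      L ((∑ j, MvPolynomial.C (X j) * MvPolynomial.X j) ^ n)
        = M ((∑ j, MvPolynomial.C (X j) * MvPolynomial.X j) ^ n))
    {f : MvPolynomial (Fin d) ℝ} (hf : f.IsHomogeneous n) : L f = M f := by
  classical
  -- the two coefficient polynomials
  set P : MvPolynomial (Fin d) ℝ :=
    ∑ k ∈ Finset.piAntidiag (Finset.univ : Finset (Fin d)) n,
      MvPolynomial.monomial (Finsupp.equivFunOnFinite.symm k)
        ((Nat.multinomial Finset.univ k : ℝ)
          * L (MvPolynomial.monomial (Finsupp.equivFunOnFinite.symm k) 1)) with hP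
  set Q : MvPolynomial (Fin d) ℝ :=
    ∑ k ∈ Finset.piAntidiag (Finset.univ : Finset (Fin d)) n,
      MvPolynomial.monomial (Finsupp.equivFunOnFinite.symm k)
        ((Nat.multinomial Finset.univ k : ℝ)
          * M (MvPolynomial.monomial (Finsupp.equivFunOnFinite.symm k) 1)) with hQ
  have hLphi : ∀ (T : MvPolynomial (Fin d) ℝ →ₗ[ℝ] ℝ) (X : Fin d → ℝ),
      T ((∑ j, MvPolynomial.C (X j) * MvPolynomial.X j) ^ n)
        = ∑ k ∈ Finset.piAntidiag (Finset.univ : Finset (Fin d)) n,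
            ((Nat.multinomial Finset.univ k : ℝ) * ∏ j, X j ^ k j)
              * T (MvPolynomial.monomial (Finsupp.equivFunOnFinite.symm k) 1) := by
    intro T X
    rw [aux_expand, map_sum]
    refine Finset.sum_congr rfl fun k _ => ?_
    have : (MvPolynomial.monomial (Finsupp.equivFunOnFinite.symm k)
        ((Nat.multinomial Finset.univ k : ℝ) * ∏ j, X j ^ k j))
        = ((Nat.multinomial Finset.univ k : ℝ) * ∏ j, X j ^ k j)
          • MvPolynomial.monomial (Finsupp.equivFunOnFinite.symm k) (1 : ℝ) := by
      rw [MvPolynomial.smul_monomial, smul_eq_mul, mul_one]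
    rw [this, LinearMap.map_smul, smul_eq_mul]
  have hPQ : P = Q := by
    apply MvPolynomial.funext
    intro X
    have hev : ∀ (T : MvPolynomial (Fin d) ℝ →ₗ[ℝ] ℝ),
        MvPolynomial.eval X (∑ k ∈ Finset.piAntidiag (Finset.univ : Finset (Fin d)) n,
          MvPolynomial.monomial (Finsupp.equivFunOnFinite.symm k)
            ((Nat.multinomial Finset.univ k : ℝ)
              * T (MvPolynomial.monomial (Finsupp.equivFunOnFinite.symm k) 1)))
        = T ((∑ j, MvPolynomial.C (X j) * MvPolynomial.X j) ^ n) := by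
      intro T
      rw [map_sum, hLphi T X]
      refine Finset.sum_congr rfl fun k _ => ?_
      rw [MvPolynomial.eval_monomial]
      have : (Finsupp.equivFunOnFinite.symm k).prod (fun i e => X i ^ e) = ∏ j, X j ^ k j :=
        Finsupp.prod_fintype _ _ (fun i => pow_zero _)
      rw [this]; ring
    rw [hP, hQ, hev L, hev M, h X]
  -- extract coefficients
  have key : ∀ u : Fin d →₀ ℕ, u.degree = n →
      L (MvPolynomial.monomial u 1) = M (MvPolynomial.monomial u 1) := by
    intro u hu
    have hmem : (u : Fin d → ℕ) ∈ Finset.piAntidiag (Finset.univ : Finset (Fin d)) n := by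
      rw [Finset.mem_piAntidiag]
      refine ⟨?_, fun i _ => Finset.mem_univ i⟩
      rw [← hu, Finsupp.degree]
      exact (Finset.sum_subset (Finset.subset_univ _)
        (fun x _ hx => Finsupp.notMem_support_iff.mp hx)).symm
    have hcoeff : ∀ (T : MvPolynomial (Fin d) ℝ →ₗ[ℝ] ℝ),
        MvPolynomial.coeff u (∑ k ∈ Finset.piAntidiag (Finset.univ : Finset (Fin d)) n,
          MvPolynomial.monomial (Finsupp.equivFunOnFinite.symm k)
            ((Nat.multinomial Finset.univ k : ℝ)
              * T (MvPolynomial.monomial (Finsupp.equivFunOnFinite.symm k) 1)))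
        = (Nat.multinomial Finset.univ (u : Fin d → ℕ) : ℝ) * T (MvPolynomial.monomial u 1) := by
      intro T
      rw [MvPolynomial.coeff_sum]
      rw [Finset.sum_eq_single (u : Fin d → ℕ)]
      · rw [MvPolynomial.coeff_monomial, if_pos (Finsupp.equivFunOnFinite_symm_coe u)]
        rw [Finsupp.equivFunOnFinite_symm_coe u]
      · intro k _ hk
        rw [MvPolynomial.coeff_monomial, if_neg]
        intro hcontra
        exact hk ((by simpa using congrArg Finsupp.equivFunOnFinite hcontra : k = Finsupp.equivFunOnFinite u))
      · intro hcontra; exact absurd hmem hcontra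
    have h0 : (Nat.multinomial Finset.univ (u : Fin d → ℕ) : ℝ) ≠ 0 :=
      Nat.cast_ne_zero.mpr (Nat.multinomial_pos _ _).ne'
    have := congrArg (MvPolynomial.coeff u) hPQ
    rw [hP, hQ, hcoeff L, hcoeff M] at this
    exact mul_left_cancel₀ h0 this
  -- conclude for f
  have hrepr := MvPolynomial.support_sum_monomial_coeff f
  calc L f = L (∑ v ∈ f.support, MvPolynomial.monomial v (MvPolynomial.coeff v f)) := by rw [hrepr]
    _ = ∑ v ∈ f.support, MvPolynomial.coeff v f * L (MvPolynomial.monomial v 1) := by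
        rw [map_sum]
        refine Finset.sum_congr rfl fun v _ => ?_
        rw [show MvPolynomial.monomial v (MvPolynomial.coeff v f)
            = MvPolynomial.coeff v f • MvPolynomial.monomial v (1:ℝ) by
          rw [MvPolynomial.smul_monomial, smul_eq_mul, mul_one], LinearMap.map_smul, smul_eq_mul]
    _ = ∑ v ∈ f.support, MvPolynomial.coeff v f * M (MvPolynomial.monomial v 1) := by
        refine Finset.sum_congr rfl fun v hv => ?_
        have hdeg : v.degree = n := by
          rw [Finsupp.degree_eq_weight_one]
          exact hf (MvPolynomial.mem_support_iff.mp hv)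
        rw [key v hdeg]
    _ = M (∑ v ∈ f.support, MvPolynomial.monomial v (MvPolynomial.coeff v f)) := by
        rw [map_sum]
        refine (Finset.sum_congr rfl fun v _ => ?_).symm
        rw [show MvPolynomial.monomial v (MvPolynomial.coeff v f)
            = MvPolynomial.coeff v f • MvPolynomial.monomial v (1:ℝ) by
          rw [MvPolynomial.smul_monomial, smul_eq_mul, mul_one], LinearMap.map_smul, smul_eq_mul]
    _ = M f := by rw [hrepr]


theorem stmt17 (d r N : ℕ) (hd : 0 < d) (hr : 0 < r) (hN : 0 < N)
    (σ : Measure (EuclideanSpace ℝ (Fin d))) [IsProbabilityMeasure σ]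
    (hσsphere : σ (Metric.sphere (0 : EuclideanSpace ℝ (Fin d)) 1) = 1)
    (hσinv : ∀ g : EuclideanSpace ℝ (Fin d) ≃ₗᵢ[ℝ] EuclideanSpace ℝ (Fin d),
      σ.map g = σ)
    (y : Fin N → EuclideanSpace ℝ (Fin d)) (hy : ∀ i, ‖y i‖ = 1)
    (w : Fin N → ℝ) (hw : ∀ i, 0 < w i)
    (c : ℝ) (hc : c = ∫ x, x ⟨0, hd⟩ ^ (2 * r) ∂σ) :
    ((∀ f : MvPolynomial (Fin d) ℝ, f.IsHomogeneous (2 * r) →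
        ∫ x, MvPolynomial.eval (fun i => x i) f ∂σ
          = ∑ i, w i * MvPolynomial.eval (fun j => y i j) f)
      ↔ (∀ X : Fin d → ℝ,
          c * (∑ j, X j ^ 2) ^ r = ∑ i, w i * (∑ j, y i j * X j) ^ (2 * r)))
    ∧ ((∀ X : Fin d → ℝ,
          c * (∑ j, X j ^ 2) ^ r = ∑ i, w i * (∑ j, y i j * X j) ^ (2 * r))
      ↔ (∀ ω : EuclideanSpace ℝ (Fin d),
          (∑ i, |(w i / c) ^ ((1 : ℝ) / (2 * r)) * ∑ j, ω j * y i j| ^ (2 * r))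
              ^ ((1 : ℝ) / (2 * r))
            = (∑ j, ω j ^ 2) ^ ((1 : ℝ) / 2))) := by
  -- a.e. on sphere
  have hae : ∀ᵐ x ∂σ, ‖x‖ = 1 := by
    have hms : MeasurableSet (Metric.sphere (0 : EuclideanSpace ℝ (Fin d)) 1) :=
      (Metric.isClosed_sphere).measurableSet
    have : σ (Metric.sphere (0 : EuclideanSpace ℝ (Fin d)) 1)ᶜ = 0 :=
      (prob_compl_eq_zero_iff hms).mpr hσsphere
    refine measure_mono_null ?_ this
    intro x hx
    simp only [Set.mem_compl_iff, Metric.mem_sphere, dist_zero_right] at *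
    exact fun hmm => hx hmm
  -- integrability of polynomials
  have hint : ∀ f : MvPolynomial (Fin d) ℝ,
      Integrable (fun x : EuclideanSpace ℝ (Fin d) => MvPolynomial.eval (fun i => x i) f) σ := by
    intro f
    have hcont : Continuous fun x : EuclideanSpace ℝ (Fin d) =>
        MvPolynomial.eval (fun i => x i) f := by
      apply f.continuous_eval.comp
      exact continuous_pi fun i => (continuous_apply i).comp (PiLp.continuous_ofLp ..)
    obtain ⟨C, hC⟩ := (isCompact_sphere (0 : EuclideanSpace ℝ (Fin d)) 1).exists_bound_of_continuousOn hcont.continuousOn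
    refine Integrable.mono' (integrable_const C) hcont.aestronglyMeasurable ?_
    filter_upwards [hae] with x hx
    exact hC x (by simp [Metric.mem_sphere, hx])
  -- change of variables
  have hmap : ∀ (g : EuclideanSpace ℝ (Fin d) ≃ₗᵢ[ℝ] EuclideanSpace ℝ (Fin d))
      (f : EuclideanSpace ℝ (Fin d) → ℝ), ∫ x, f (g x) ∂σ = ∫ x, f x ∂σ := by
    intro g f
    conv_rhs => rw [← hσinv g]
    exact (integral_map_equiv (g.toHomeomorph.toMeasurableEquiv) f).symm
  -- rotation invariance
  have hrot : ∀ u : EuclideanSpace ℝ (Fin d), ‖u‖ = 1 →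
      ∫ x, (∑ j, x j * u j) ^ (2 * r) ∂σ = c := by
    intro u hu
    set e0 : EuclideanSpace ℝ (Fin d) := EuclideanSpace.single ⟨0, hd⟩ (1 : ℝ) with he0def
    have he0 : ‖e0‖ = 1 := by simp [he0def]
    set g : EuclideanSpace ℝ (Fin d) ≃ₗᵢ[ℝ] EuclideanSpace ℝ (Fin d) :=
      Submodule.reflection (ℝ ∙ (e0 - u))ᗮ with hgdef
    have hg : g e0 = u := Submodule.reflection_sub (he0.trans hu.symm)
    have hcoord : ∀ x : EuclideanSpace ℝ (Fin d), (∑ j, (g x) j * u j) = x ⟨0, hd⟩ := by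
      intro x
      have h1 : (∑ j, (g x) j * u j) = inner ℝ (g x) u := by
        rw [PiLp.inner_apply]
        exact Finset.sum_congr rfl fun j _ => by simp [RCLike.inner_apply, mul_comm]
      have h2 : (inner ℝ (g x) u : ℝ) = inner ℝ x e0 := by
        rw [← hg, LinearIsometryEquiv.inner_map_map]
      rw [h1, h2, he0def]
      simp [EuclideanSpace.inner_single_right]
    have := hmap g (fun x => (∑ j, x j * u j) ^ (2 * r))
    rw [hc, ← this]
    refine integral_congr_ae (Filter.Eventually.of_forall fun x => ?_)
    simp only []
    rw [hcoord x]
  -- scaling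
  have hL6 : ∀ X : Fin d → ℝ,
      ∫ x, (∑ j, x j * X j) ^ (2 * r) ∂σ = c * (∑ j, X j ^ 2) ^ r := by
    intro X
    by_cases hX : (∑ j, X j ^ 2) = 0
    · have hz : ∀ j, X j = 0 := by
        intro j
        have := (Finset.sum_eq_zero_iff_of_nonneg
          (fun i _ => sq_nonneg (X i))).mp hX j (Finset.mem_univ j)
        exact (pow_eq_zero_iff two_ne_zero).mp this
      simp [hz, hX, zero_pow, hr.ne', (Nat.mul_ne_zero two_ne_zero hr.ne')]
    · have hnn : (0:ℝ) ≤ ∑ j, X j ^ 2 := Finset.sum_nonneg fun i _ => sq_nonneg (X i)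
      have hpos : (0:ℝ) < ∑ j, X j ^ 2 := lt_of_le_of_ne hnn (Ne.symm hX)
      set t : ℝ := Real.sqrt (∑ j, X j ^ 2) with ht
      have htpos : 0 < t := Real.sqrt_pos.mpr hpos
      have ht2 : t ^ 2 = ∑ j, X j ^ 2 := Real.sq_sqrt hnn
      set u : EuclideanSpace ℝ (Fin d) :=
        (WithLp.equiv 2 (Fin d → ℝ)).symm (fun j => t⁻¹ * X j) with hu
      have huj : ∀ j, u j = t⁻¹ * X j := fun j => rfl
      have hun : ‖u‖ = 1 := by
        rw [EuclideanSpace.norm_eq]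
        simp only [Real.norm_eq_abs, sq_abs]
        have : ∀ j, u j ^ 2 = t⁻¹ ^ 2 * X j ^ 2 := fun j => by rw [huj j]; ring
        rw [Finset.sum_congr rfl fun j _ => this j, ← Finset.mul_sum, ← ht2]
        field_simp
        simp
      have hXu : ∀ x : EuclideanSpace ℝ (Fin d), (∑ j, x j * X j) = t * (∑ j, x j * u j) := by
        intro x
        rw [Finset.mul_sum]
        refine Finset.sum_congr rfl fun j _ => ?_
        rw [huj j]
        field_simp
      calc ∫ x, (∑ j, x j * X j) ^ (2 * r) ∂σ
          = ∫ x, t ^ (2 * r) * (∑ j, x j * u j) ^ (2 * r) ∂σ := by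
            refine integral_congr_ae (Filter.Eventually.of_forall fun x => ?_)
            simp only []
            rw [hXu x, mul_pow]
        _ = t ^ (2 * r) * ∫ x, (∑ j, x j * u j) ^ (2 * r) ∂σ := integral_const_mul _ _
        _ = t ^ (2 * r) * c := by rw [hrot u hun]
        _ = c * (∑ j, X j ^ 2) ^ r := by
            rw [pow_mul, ht2, mul_comm]
  -- positivity of c
  have hintj : ∀ j : Fin d, Integrable (fun x : EuclideanSpace ℝ (Fin d) => x j ^ (2*r)) σ := by
    intro j
    have := hint (MvPolynomial.X j ^ (2*r))
    simpa using this
  have hcoordint : ∀ j : Fin d, ∫ x, x j ^ (2 * r) ∂σ = c := by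
    intro j
    have h1 := hrot (EuclideanSpace.single j 1) (by simp)
    rw [← h1]
    refine integral_congr_ae (Filter.Eventually.of_forall fun x => ?_)
    simp only []
    congr 1
    rw [Finset.sum_eq_single j]
    · simp
    · intro b _ hb; simp [EuclideanSpace.single_apply, hb]
    · intro hj; exact absurd (Finset.mem_univ j) hj
  have hcpos : 0 < c := by
    have hsum : ∫ x, (∑ j, x j ^ (2 * r)) ∂σ = d * c := by
      rw [integral_finset_sum _ (fun j _ => hintj j)]
      rw [Finset.sum_congr rfl fun j _ => hcoordint j]
      simp [mul_comm]
    have hlow : ∀ᵐ x ∂σ, ((d:ℝ)⁻¹) ^ (r - 1) ≤ ∑ j, x j ^ (2 * r) := by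
      filter_upwards [hae] with x hx
      have hx2 : ∑ j, x j ^ 2 = 1 := by
        have hS : (0:ℝ) ≤ ∑ i, ‖x i‖ ^ 2 := Finset.sum_nonneg fun i _ => sq_nonneg ‖x i‖
        have h1 : Real.sqrt (∑ i, ‖x i‖ ^ 2) = 1 := by rw [← EuclideanSpace.norm_eq]; exact hx
        have h2 : ∑ i, ‖x i‖ ^ 2 = 1 := by
          rw [← Real.sq_sqrt hS, h1, one_pow]
        simpa [Real.norm_eq_abs, sq_abs] using h2
      have hcheb := pow_sum_div_card_le_sum_pow
        (f := fun j : Fin d => x j ^ 2) (s := Finset.univ) (fun i _ => sq_nonneg (x i)) (r - 1)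
      rw [hx2] at hcheb
      have hrr : r - 1 + 1 = r := Nat.succ_pred_eq_of_pos hr
      rw [hrr] at hcheb
      simp only [one_pow, Finset.card_univ, Fintype.card_fin] at hcheb
      calc ((d:ℝ)⁻¹) ^ (r-1) = 1 / (d:ℝ) ^ (r-1) := by rw [inv_pow, one_div]
        _ ≤ ∑ j, (x j ^ 2) ^ r := by
            simpa using hcheb
        _ = ∑ j, x j ^ (2 * r) := by
            exact Finset.sum_congr rfl fun j _ => by rw [← pow_mul]
    have hle : ((d:ℝ)⁻¹) ^ (r - 1) ≤ (d:ℝ) * c := by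
      rw [← hsum]
      have h0 : ((d:ℝ)⁻¹) ^ (r-1) = ∫ _x, ((d:ℝ)⁻¹) ^ (r-1) ∂σ := by simp
      rw [h0]
      exact integral_mono_ae (integrable_const _)
        (integrable_finset_sum _ (fun j _ => hintj j)) hlow
    have hdpos : (0:ℝ) < d := Nat.cast_pos.mpr hd
    nlinarith [pow_pos (inv_pos.mpr hdpos) (r-1)]
  -- evaluation of the power of a linear form
  have heval : ∀ (X v : Fin d → ℝ),
      MvPolynomial.eval v ((∑ j, MvPolynomial.C (X j) * MvPolynomial.X j) ^ (2 * r))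
        = (∑ j, X j * v j) ^ (2 * r) := by
    intro X v
    rw [map_pow, map_sum]
    congr 1
    exact Finset.sum_congr rfl fun j _ => by simp
  -- homogeneity of powers of linear forms
  have hhom : ∀ X : Fin d → ℝ,
      ((∑ j, MvPolynomial.C (X j) * MvPolynomial.X j : MvPolynomial (Fin d) ℝ) ^ (2 * r)).IsHomogeneous (2 * r) := by
    intro X
    have h1 : (∑ j, MvPolynomial.C (X j) * MvPolynomial.X j : MvPolynomial (Fin d) ℝ).IsHomogeneous 1 := by
      apply MvPolynomial.IsHomogeneous.sum
      intro j _
      simpa using (MvPolynomial.isHomogeneous_X ℝ j).C_mul (X j)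
    simpa using h1.pow (2 * r)
  -- the two linear functionals
  have hintL : ∀ f : MvPolynomial (Fin d) ℝ,
      Integrable (fun x : EuclideanSpace ℝ (Fin d) => MvPolynomial.eval (fun i => x i) f) σ := hint
  set L : MvPolynomial (Fin d) ℝ →ₗ[ℝ] ℝ :=
    { toFun := fun f => ∫ x, MvPolynomial.eval (fun i => x i) f ∂σ
      map_add' := fun f g => by
        simp only [map_add]
        exact integral_add (hintL f) (hintL g)
      map_smul' := fun a f => by
        simp only [MvPolynomial.smul_eq_C_mul, map_mul, MvPolynomial.eval_C,
          RingHom.id_apply, smul_eq_mul]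
        exact integral_const_mul a _ } with hLdef
  set M : MvPolynomial (Fin d) ℝ →ₗ[ℝ] ℝ :=
    { toFun := fun f => ∑ i, w i * MvPolynomial.eval (fun j => y i j) f
      map_add' := fun f g => by
        simp only [map_add, mul_add]
        exact Finset.sum_add_distrib
      map_smul' := fun a f => by
        simp only [MvPolynomial.smul_eq_C_mul, map_mul, MvPolynomial.eval_C,
          RingHom.id_apply, smul_eq_mul, Finset.mul_sum]
        exact Finset.sum_congr rfl fun i _ => by ring } with hMdef
  have hyn : ∀ i, ∑ j, y i j ^ 2 = 1 := by
    intro i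
    have hS : (0:ℝ) ≤ ∑ j, ‖y i j‖ ^ 2 := Finset.sum_nonneg fun j _ => sq_nonneg _
    have h1 : Real.sqrt (∑ j, ‖y i j‖ ^ 2) = 1 := by rw [← EuclideanSpace.norm_eq]; exact hy i
    have h2 : ∑ j, ‖y i j‖ ^ 2 = 1 := by rw [← Real.sq_sqrt hS, h1, one_pow]
    simpa [Real.norm_eq_abs, sq_abs] using h2
  constructor
  · constructor
    · -- (i) → (ii)
      intro h1 X
      have h2 := h1 _ (hhom X)
      rw [show (∫ x, MvPolynomial.eval (fun i => x i)
            ((∑ j, MvPolynomial.C (X j) * MvPolynomial.X j) ^ (2 * r)) ∂σ)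
          = ∫ x, (∑ j, x j * X j) ^ (2*r) ∂σ from
        integral_congr_ae (Filter.Eventually.of_forall fun x => by
          simp only [heval X]
          congr 1
          exact Finset.sum_congr rfl fun j _ => mul_comm _ _), hL6 X] at h2
      rw [h2]
      refine Finset.sum_congr rfl fun i _ => ?_
      rw [heval X (fun j => y i j)]
      congr 2
      exact Finset.sum_congr rfl fun j _ => mul_comm _ _
    · -- (ii) → (i)
      intro h2 f hf
      have hagree : ∀ X : Fin d → ℝ,
          L ((∑ j, MvPolynomial.C (X j) * MvPolynomial.X j) ^ (2 * r))
            = M ((∑ j, MvPolynomial.C (X j) * MvPolynomial.X j) ^ (2 * r)) := by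
        intro X
        have hLX : L ((∑ j, MvPolynomial.C (X j) * MvPolynomial.X j) ^ (2 * r))
            = c * (∑ j, X j ^ 2) ^ r := by
          rw [hLdef]
          simp only [LinearMap.coe_mk, AddHom.coe_mk]
          rw [show (∫ x, MvPolynomial.eval (fun i => x i)
                ((∑ j, MvPolynomial.C (X j) * MvPolynomial.X j) ^ (2 * r)) ∂σ)
              = ∫ x, (∑ j, x j * X j) ^ (2*r) ∂σ from
            integral_congr_ae (Filter.Eventually.of_forall fun x => by
              simp only [heval X]
              congr 1
              exact Finset.sum_congr rfl fun j _ => mul_comm _ _)]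
          exact hL6 X
        have hMX : M ((∑ j, MvPolynomial.C (X j) * MvPolynomial.X j) ^ (2 * r))
            = c * (∑ j, X j ^ 2) ^ r := by
          rw [hMdef]
          simp only [LinearMap.coe_mk, AddHom.coe_mk]
          rw [h2 X]
          refine (Finset.sum_congr rfl fun i _ => ?_).symm
          rw [heval X (fun j => y i j)]
          congr 2
          exact Finset.sum_congr rfl fun j _ => mul_comm _ _
        rw [hLX, hMX]
      exact key_agree L M hagree hf
  · -- part 2
    have habs : ∀ (s : ℝ) (i : Fin N),
        |(w i / c) ^ ((1 : ℝ) / (2 * r)) * s| ^ (2 * r) = (w i / c) * s ^ (2 * r) := by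
      intro s i
      have heven : Even (2 * r) := even_two_mul r
      have hnn : (0:ℝ) ≤ w i / c := div_nonneg (hw i).le hcpos.le
      rw [abs_mul, mul_pow, heven.pow_abs s, abs_of_nonneg (Real.rpow_nonneg hnn _)]
      congr 1
      rw [← Real.rpow_natCast ((w i / c) ^ ((1 : ℝ) / (2 * r))) (2*r),
        ← Real.rpow_mul hnn]
      rw [show (1 : ℝ) / (2 * r) * ((2*r : ℕ) : ℝ) = 1 by
        have hr0 : (r:ℝ) ≠ 0 := Nat.cast_ne_zero.mpr hr.ne'
        push_cast
        field_simp]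
      exact Real.rpow_one _
    constructor
    · -- (ii) → (iii)
      intro h2 ω
      have hsum : ∑ i, |(w i / c) ^ ((1 : ℝ) / (2 * r)) * ∑ j, ω j * y i j| ^ (2 * r)
          = (∑ j, ω j ^ 2) ^ r := by
        have h3 := h2 (fun j => ω j)
        rw [show (∑ i, w i * (∑ j, y i j * ω j) ^ (2 * r))
            = ∑ i, w i * (∑ j, ω j * y i j) ^ (2 * r) from
          Finset.sum_congr rfl fun i _ => by
            rw [show (∑ j, y i j * ω j) = ∑ j, ω j * y i j from
              Finset.sum_congr rfl fun j _ => mul_comm _ _]] at h3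
        rw [Finset.sum_congr rfl fun i _ => habs (∑ j, ω j * y i j) i]
        have : ∑ i, w i / c * (∑ j, ω j * y i j) ^ (2 * r)
            = c⁻¹ * ∑ i, w i * (∑ j, ω j * y i j) ^ (2 * r) := by
          rw [Finset.mul_sum]
          exact Finset.sum_congr rfl fun i _ => by ring
        rw [this, ← h3]
        field_simp
      rw [hsum]
      have hnn : (0:ℝ) ≤ ∑ j, ω j ^ 2 := Finset.sum_nonneg fun j _ => sq_nonneg _
      rw [← Real.rpow_natCast (∑ j, ω j ^ 2) r, ← Real.rpow_mul hnn]
      congr 1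
      have hr0 : (r:ℝ) ≠ 0 := Nat.cast_ne_zero.mpr hr.ne'
      field_simp
    · -- (iii) → (ii)
      intro h3 X
      have h4 := h3 ((WithLp.equiv 2 (Fin d → ℝ)).symm X)
      have hcoord : ∀ j, ((WithLp.equiv 2 (Fin d → ℝ)).symm X) j = X j := fun j => rfl
      simp only [hcoord] at h4
      set B : ℝ := ∑ i, |(w i / c) ^ ((1 : ℝ) / (2 * r)) * ∑ j, X j * y i j| ^ (2 * r) with hB
      have hBnn : 0 ≤ B := Finset.sum_nonneg fun i _ => by positivity
      have hXnn : (0:ℝ) ≤ ∑ j, X j ^ 2 := Finset.sum_nonneg fun j _ => sq_nonneg _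
      have h5 := congrArg (fun z : ℝ => z ^ ((2*r : ℕ) : ℝ)) h4
      rw [← Real.rpow_mul hBnn, ← Real.rpow_mul hXnn] at h5
      have hr0 : ((2*r : ℕ) : ℝ) ≠ 0 := by
        push_cast
        positivity
      rw [show (1 : ℝ) / (2 * r) * ((2*r : ℕ) : ℝ) = 1 by push_cast; field_simp] at h5
      rw [show (1 : ℝ) / 2 * ((2*r : ℕ) : ℝ) = (r : ℝ) by push_cast; ring] at h5
      rw [Real.rpow_one, Real.rpow_natCast] at h5
      -- h5 : B = (∑ X^2)^r
      rw [hB, Finset.sum_congr rfl fun i _ => habs (∑ j, X j * y i j) i] at h5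
      have h6 : ∑ i, w i / c * (∑ j, X j * y i j) ^ (2 * r)
          = c⁻¹ * ∑ i, w i * (∑ j, y i j * X j) ^ (2 * r) := by
        rw [Finset.mul_sum]
        refine Finset.sum_congr rfl fun i _ => ?_
        rw [show (∑ j, X j * y i j) = ∑ j, y i j * X j from
          Finset.sum_congr rfl fun j _ => mul_comm _ _]
        ring
      rw [h6] at h5
      have := congrArg (fun z => c * z) h5
      rw [← mul_assoc, mul_inv_cancel₀ hcpos.ne', one_mul] at this
      exact this.symm
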